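/- Representation of rotation-equivariant maps on the plane. Let h : ℝ² → ℝ² satisfy h(0) = 0 and h(R(φ)·w) = R(φ)·h(w) for all φ ∈ ℝ and w ∈ ℝ². Then there exist functions g : ℝ_{≥0} → ℝ and b : ℝ_{≥0} → ℝ such that h(w) = (g(‖w‖)·I₂ + b(‖w‖)·j)·w for all w ∈ ℝ². -/

import Mathlib

noncomputable section
open Matrix

/-- Vectors in ℝ². -/
abbrev V2 : Type := Fin 2 → ℝ
/-- 2×2 real matrices. -/
abbrev M2 : Type := Matrix (Fin 2) (Fin 2) ℝ

/-- The 90° rotation matrix `j`. -/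
def j2 : M2 := !![0, -1; 1, 0]

/-- The rotation matrix `R(θ)`. -/
def Rot (θ : ℝ) : M2 := !![Real.cos θ, -Real.sin θ; Real.sin θ, Real.cos θ]

/-- The unit vector `r(θ) = (cos θ, sin θ)`. -/
def rvec (θ : ℝ) : V2 := ![Real.cos θ, Real.sin θ]

/-- The Euclidean norm on ℝ². -/
def enorm2 (w : V2) : ℝ := Real.sqrt (w 0 ^ 2 + w 1 ^ 2)

/-- Representation of rotation-equivariant maps on the plane:
if h(0) = 0 and h(R(φ)w) = R(φ)h(w) for all φ, w, then there exist
g, b : ℝ≥0 → ℝ with h(w) = (g(‖w‖) I₂ + b(‖w‖) j) w for all w. -/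
theorem equivariant_map_representation (h : V2 → V2) (h0 : h 0 = 0)
    (heq : ∀ (φ : ℝ) (w : V2), h (Rot φ *ᵥ w) = Rot φ *ᵥ h w) :
    ∃ g b : ℝ → ℝ, ∀ w : V2,
      h w = g (enorm2 w) • w + b (enorm2 w) • (j2 *ᵥ w) := by
  refine ⟨fun r => (h ![r, 0]) 0 / r, fun r => (h ![r, 0]) 1 / r, fun w => ?_⟩
  by_cases hw : w = 0
  · subst hw
    have hj : (j2 *ᵥ (0 : V2)) = 0 := by simp
    simp [h0, hj]
  · -- w ≠ 0
    have hne : w 0 ≠ 0 ∨ w 1 ≠ 0 := by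
      by_contra hc
      push_neg at hc
      apply hw
      funext i
      fin_cases i <;> simp [hc.1, hc.2]
    set r := enorm2 w with hrdef
    have hsq : w 0 ^ 2 + w 1 ^ 2 > 0 := by
      rcases hne with h1 | h1 <;> positivity
    have hr : 0 < r := Real.sqrt_pos.mpr hsq
    have hr2 : r ^ 2 = w 0 ^ 2 + w 1 ^ 2 := Real.sq_sqrt hsq.le
    set z : ℂ := ⟨w 0, w 1⟩ with hz
    have hzabs : ‖z‖ = r := by
      rw [Complex.norm_def, Complex.normSq_mk]
      rw [hrdef, enorm2]
      ring_nf
    set θ := Complex.arg z with hθ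
    have hpolar := Complex.norm_mul_cos_add_sin_mul_I z
    rw [hzabs, ← hθ] at hpolar
    have hw0 : w 0 = r * Real.cos θ := by
      have := congrArg Complex.re hpolar
      simpa [hz, Complex.ext_iff, Complex.cos_ofReal_re, Complex.sin_ofReal_re] using this.symm
    have hw1 : w 1 = r * Real.sin θ := by
      have := congrArg Complex.im hpolar
      simpa [hz, Complex.ext_iff, Complex.cos_ofReal_re, Complex.sin_ofReal_re] using this.symm
    have hwrot : Rot θ *ᵥ ![r, 0] = w := by
      funext i
      fin_cases i <;>
        simp [Rot, Matrix.mulVec, dotProduct, Fin.sum_univ_two, hw0, hw1, mul_comm]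
    have key := heq θ ![r, 0]
    rw [hwrot] at key
    rw [key]
    funext i
    fin_cases i <;>
      · simp [Rot, j2, Matrix.mulVec, dotProduct, Fin.sum_univ_two, hw0, hw1]
        field_simp
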